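/- Let 1 < q < n be coprime integers with n−q odd, and let 𝔻_{n,q} ≤ GL(2,ℂ) be the subgroup generated by ψ_{2q} = diag(ε, ε^{−1}) with ε a primitive (2q)-th root of unity, τ = [[0, i],[i, 0]], and φ = diag(ω, ω) with ω a primitive (2(n−q))-th root of unity. Then 𝔻_{n,q} is a finite group of order 4(n−q)q. -/

import Mathlib

open Matrix

private def qmap {q : ℕ} (ψ τ : GL (Fin 2) ℂ) : QuaternionGroup q → GL (Fin 2) ℂ
  | QuaternionGroup.a j => ψ ^ j.val
  | QuaternionGroup.xa j => τ * ψ ^ j.val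

theorem stmt13 (n q : ℕ) (hq : 1 < q) (hn : q < n) (hcop : Nat.Coprime n q)
    (hodd : Odd (n - q)) (ε i ω : ℂ)
    (hε : IsPrimitiveRoot ε (2 * q)) (hi : IsPrimitiveRoot i 4)
    (hω : IsPrimitiveRoot ω (2 * (n - q)))
    (ψ τ φ : GL (Fin 2) ℂ)
    (hψ : (ψ : Matrix (Fin 2) (Fin 2) ℂ) = !![ε, 0; 0, ε⁻¹])
    (hτ : (τ : Matrix (Fin 2) (Fin 2) ℂ) = !![0, i; i, 0])
    (hφ : (φ : Matrix (Fin 2) (Fin 2) ℂ) = !![ω, 0; 0, ω]) :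
    Finite (Subgroup.closure {ψ, τ, φ} : Subgroup (GL (Fin 2) ℂ)) ∧
      Nat.card (Subgroup.closure {ψ, τ, φ} : Subgroup (GL (Fin 2) ℂ)) =
        4 * (n - q) * q := by
  set m := n - q with hm
  have hm1 : 0 < m := Nat.sub_pos_of_lt hn
  have hq0 : 0 < q := lt_trans one_pos hq
  haveI : NeZero q := ⟨hq0.ne'⟩
  haveI : NeZero (2 * q) := ⟨by positivity⟩
  haveI : NeZero (2 * m) := ⟨by positivity⟩
  haveI : Fact (1 < 2 * q) := ⟨by omega⟩
  haveI : Fact (1 < 2 * m) := ⟨by omega⟩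
  -- basic facts about the roots of unity
  have hεne : ε ≠ 0 := hε.ne_zero (by positivity)
  have hωne : ω ≠ 0 := hω.ne_zero (by positivity)
  have hε1 : ε * ε⁻¹ = 1 := mul_inv_cancel₀ hεne
  have hεq : ε ^ q = -1 := by
    have h2 : ε ^ q * ε ^ q = 1 := by
      rw [← pow_add]
      have : q + q = 2 * q := by ring
      rw [this, hε.pow_eq_one]
    rcases mul_self_eq_one_iff.mp h2 with h | h
    · exact absurd h (hε.pow_ne_one_of_pos_of_lt hq0.ne' (by omega))
    · exact h
  have hεinvq : ε⁻¹ ^ q = -1 := by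
    rw [inv_pow, hεq]; norm_num
  have hii : i * i = -1 := by
    have h2 : (i ^ 2) * (i ^ 2) = 1 := by
      rw [← pow_add]
      exact hi.pow_eq_one
    rcases mul_self_eq_one_iff.mp h2 with h | h
    · exact absurd h (hi.pow_ne_one_of_pos_of_lt two_ne_zero (by norm_num))
    · rw [← h]; ring
  have hωm : ω ^ m = -1 := by
    have h2 : ω ^ m * ω ^ m = 1 := by
      rw [← pow_add]
      have : m + m = 2 * m := by ring
      rw [this, hω.pow_eq_one]
    rcases mul_self_eq_one_iff.mp h2 with h | h
    · exact absurd h (hω.pow_ne_one_of_pos_of_lt hm1.ne' (by omega))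
    · exact h
  -- matrix forms of powers
  have hψpow : ∀ a : ℕ, ((ψ ^ a : GL (Fin 2) ℂ) : Matrix (Fin 2) (Fin 2) ℂ)
      = !![ε ^ a, 0; 0, ε⁻¹ ^ a] := by
    intro a
    rw [Units.val_pow_eq_pow_val, hψ]
    induction a with
    | zero => simp [Matrix.one_fin_two]
    | succ a ih =>
      rw [pow_succ, ih, Matrix.mul_fin_two, pow_succ, pow_succ]
      congr 1 <;> ring
  have hφpow : ∀ a : ℕ, ((φ ^ a : GL (Fin 2) ℂ) : Matrix (Fin 2) (Fin 2) ℂ)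
      = !![ω ^ a, 0; 0, ω ^ a] := by
    intro a
    rw [Units.val_pow_eq_pow_val, hφ]
    induction a with
    | zero => simp [Matrix.one_fin_two]
    | succ a ih =>
      rw [pow_succ, ih, Matrix.mul_fin_two, pow_succ]
      congr 1 <;> ring
  -- group-level relations
  have hψ2q : ψ ^ (2 * q) = 1 := by
    ext : 1
    rw [hψpow, hε.pow_eq_one, inv_pow, hε.pow_eq_one, Units.val_one, Matrix.one_fin_two]
    norm_num
  have hφ2m : φ ^ (2 * m) = 1 := by
    ext : 1
    rw [hφpow, hω.pow_eq_one, Units.val_one, Matrix.one_fin_two]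
  have Pcongr : ∀ a b : ℕ, a ≡ b [MOD 2 * q] → ψ ^ a = ψ ^ b := by
    intro a b h
    exact pow_eq_pow_iff_modEq.mpr (h.of_dvd (orderOf_dvd_of_pow_eq_one hψ2q))
  have Wcongr : ∀ a b : ℕ, a ≡ b [MOD 2 * m] → φ ^ a = φ ^ b := by
    intro a b h
    exact pow_eq_pow_iff_modEq.mpr (h.of_dvd (orderOf_dvd_of_pow_eq_one hφ2m))
  have Padd : ∀ u v : ZMod (2 * q), ψ ^ (u + v).val = ψ ^ u.val * ψ ^ v.val := by
    intro u v
    rw [← pow_add]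
    apply Pcongr
    rw [ZMod.val_add]
    exact Nat.mod_modEq _ _
  have Wadd : ∀ u v : ZMod (2 * m), φ ^ (u + v).val = φ ^ u.val * φ ^ v.val := by
    intro u v
    rw [← pow_add]
    apply Wcongr
    rw [ZMod.val_add]
    exact Nat.mod_modEq _ _
  have Pneg : ∀ u : ZMod (2 * q), ψ ^ (-u).val = (ψ ^ u.val)⁻¹ := by
    intro u
    apply eq_inv_of_mul_eq_one_left
    rw [← Padd, neg_add_cancel]
    simp
  -- τ ψ relation
  have hτψ : ψ * τ * ψ = τ := by
    ext : 1
    rw [Units.val_mul, Units.val_mul, hψ, hτ, Matrix.mul_fin_two, Matrix.mul_fin_two]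
    have e1 : (ε * 0 + 0 * i) * ε + (ε * i + 0 * 0) * 0 = 0 := by ring
    have e2 : (ε * 0 + 0 * i) * 0 + (ε * i + 0 * 0) * ε⁻¹ = i := by
      linear_combination i * hε1
    have e3 : (0 * 0 + ε⁻¹ * i) * ε + (0 * i + ε⁻¹ * 0) * 0 = i := by
      linear_combination i * hε1
    have e4 : (0 * 0 + ε⁻¹ * i) * 0 + (0 * i + ε⁻¹ * 0) * ε⁻¹ = 0 := by ring
    rw [e1, e2, e3, e4]
  have h1 : ψ * τ = τ * ψ⁻¹ := by
    have := congrArg (fun x => x * ψ⁻¹) hτψ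
    simpa [mul_assoc] using this
  have hcomm : ∀ a : ℕ, ψ ^ a * τ = τ * (ψ ^ a)⁻¹ := by
    intro a
    induction a with
    | zero => simp
    | succ a ih =>
      rw [pow_succ, mul_assoc, h1, ← mul_assoc, ih]
      group
  have Pτ : ∀ u : ZMod (2 * q), ψ ^ u.val * τ = τ * ψ ^ (-u).val := by
    intro u
    rw [hcomm, Pneg]
  have hτ2 : τ * τ = ψ ^ q := by
    ext : 1
    rw [Units.val_mul, hτ, hψpow, hεq, hεinvq, Matrix.mul_fin_two]
    have e1 : (0 : ℂ) * 0 + i * i = -1 := by rw [hii]; ring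
    have e2 : (0 : ℂ) * i + i * 0 = 0 := by ring
    have e3 : i * 0 + (0 : ℂ) * i = 0 := by ring
    have e4 : i * i + (0 : ℂ) * 0 = -1 := by rw [hii]; ring
    rw [e1, e2, e3, e4]
  have hqval : ((q : ZMod (2 * q))).val = q := ZMod.val_cast_of_lt (by omega)
  have hmval : ((m : ZMod (2 * m))).val = m := ZMod.val_cast_of_lt (by omega)
  -- φ is central among the generators
  have hφψ : φ * ψ = ψ * φ := by
    ext : 1
    rw [Units.val_mul, Units.val_mul, hφ, hψ, Matrix.mul_fin_two, Matrix.mul_fin_two]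
    congr 1 <;> ring
  have hφτ : φ * τ = τ * φ := by
    ext : 1
    rw [Units.val_mul, Units.val_mul, hφ, hτ, Matrix.mul_fin_two, Matrix.mul_fin_two]
    congr 1 <;> ring
  -- the two homs
  let QH : QuaternionGroup q →* GL (Fin 2) ℂ :=
    { toFun := qmap ψ τ
      map_one' := by
        show ψ ^ (0 : ZMod (2 * q)).val = 1
        simp
      map_mul' := by
        rintro (u | u) (v | v)
        · show ψ ^ (u + v).val = ψ ^ u.val * ψ ^ v.val
          exact Padd u v
        · show τ * ψ ^ (v - u).val = ψ ^ u.val * (τ * ψ ^ v.val)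
          rw [← mul_assoc, Pτ, mul_assoc, ← Padd, neg_add_eq_sub]
        · show τ * ψ ^ (u + v).val = τ * ψ ^ u.val * ψ ^ v.val
          rw [mul_assoc, Padd]
        · show ψ ^ ((q : ZMod (2 * q)) + v - u).val = τ * ψ ^ u.val * (τ * ψ ^ v.val)
          have hstep : τ * ψ ^ u.val * (τ * ψ ^ v.val)
              = (τ * τ) * (ψ ^ (-u).val * ψ ^ v.val) := by
            rw [mul_assoc, ← mul_assoc (ψ ^ u.val), Pτ]
            group
          have hq' : ψ ^ q = ψ ^ ((q : ZMod (2 * q))).val := by rw [hqval]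
          rw [hstep, hτ2, ← Padd, hq', ← Padd]
          congr 1
          ring }
  let WH : Multiplicative (ZMod (2 * m)) →* GL (Fin 2) ℂ :=
    MonoidHom.mk' (fun k => φ ^ (Multiplicative.toAdd k).val) (by
      intro k l
      exact Wadd _ _)
  have hWQcomm : ∀ k g, Commute (WH k) (QH g) := by
    rintro k (u | u)
    · exact (show Commute φ ψ from hφψ).pow_pow _ _
    · exact Commute.mul_right ((show Commute φ τ from hφτ).pow_left _)
        ((show Commute φ ψ from hφψ).pow_pow _ _)
  let F : Multiplicative (ZMod (2 * m)) × QuaternionGroup q →* GL (Fin 2) ℂ :=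
    WH.noncommCoprod QH hWQcomm
  have hFapply : ∀ k g, F (k, g) = φ ^ (Multiplicative.toAdd k).val * qmap ψ τ g := by
    intro k g; rfl
  -- range = closure
  have hψmem : ψ ∈ ({ψ, τ, φ} : Set (GL (Fin 2) ℂ)) := by simp
  have hτmem : τ ∈ ({ψ, τ, φ} : Set (GL (Fin 2) ℂ)) := by simp
  have hφmem : φ ∈ ({ψ, τ, φ} : Set (GL (Fin 2) ℂ)) := by simp
  have hrange : F.range = Subgroup.closure {ψ, τ, φ} := by
    apply le_antisymm
    · rintro x ⟨⟨k, g⟩, rfl⟩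
      rw [hFapply]
      apply Subgroup.mul_mem
      · exact Subgroup.pow_mem _ (Subgroup.subset_closure hφmem) _
      · cases g with
        | a u => exact Subgroup.pow_mem _ (Subgroup.subset_closure hψmem) _
        | xa u =>
          exact Subgroup.mul_mem _ (Subgroup.subset_closure hτmem)
            (Subgroup.pow_mem _ (Subgroup.subset_closure hψmem) _)
    · have mem1 : ψ ∈ F.range := by
        refine ⟨(1, QuaternionGroup.a 1), ?_⟩
        rw [hFapply]
        show φ ^ (Multiplicative.toAdd (1 : Multiplicative (ZMod (2 * m)))).val
            * ψ ^ (1 : ZMod (2 * q)).val = _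
        rw [toAdd_one, ZMod.val_zero, ZMod.val_one, pow_zero, pow_one, one_mul]
      have mem2 : τ ∈ F.range := by
        refine ⟨(1, QuaternionGroup.xa 0), ?_⟩
        rw [hFapply]
        show φ ^ (Multiplicative.toAdd (1 : Multiplicative (ZMod (2 * m)))).val
            * (τ * ψ ^ (0 : ZMod (2 * q)).val) = _
        rw [toAdd_one, ZMod.val_zero, ZMod.val_zero, pow_zero, pow_zero, one_mul, mul_one]
      have mem3 : φ ∈ F.range := by
        refine ⟨(Multiplicative.ofAdd 1, 1), ?_⟩
        rw [hFapply]
        show φ ^ (Multiplicative.toAdd (Multiplicative.ofAdd (1 : ZMod (2 * m)))).val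
            * ψ ^ (0 : ZMod (2 * q)).val = _
        rw [toAdd_ofAdd, ZMod.val_zero, ZMod.val_one, pow_zero, pow_one, mul_one]
      rw [Subgroup.closure_le]
      rintro x (rfl | rfl | rfl) <;> assumption
  -- finiteness
  haveI : Finite (Multiplicative (ZMod (2 * m)) × QuaternionGroup q) := by
    infer_instance
  have hfin : Finite (Subgroup.closure {ψ, τ, φ} : Subgroup (GL (Fin 2) ℂ)) := by
    rw [← hrange]
    have h1' : (F.range : Set (GL (Fin 2) ℂ)) = Set.range F := MonoidHom.coe_range F
    have h2' : (Set.range F).Finite := Set.finite_range F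
    rw [← h1'] at h2'
    exact h2'.to_subtype
  refine ⟨hfin, ?_⟩
  -- kernel
  set x₀ : Multiplicative (ZMod (2 * m)) × QuaternionGroup q :=
    (Multiplicative.ofAdd (m : ZMod (2 * m)), QuaternionGroup.a (q : ZMod (2 * q))) with hx₀
  have hker : (F.ker : Set _) = {1, x₀} := by
    ext ⟨k, g⟩
    simp only [SetLike.mem_coe, MonoidHom.mem_ker, Set.mem_insert_iff, Set.mem_singleton_iff]
    constructor
    · intro hF
      rw [hFapply] at hF
      cases g with
      | xa u =>
        exfalso
        have hval := congrArg (fun M : GL (Fin 2) ℂ => (M : Matrix (Fin 2) (Fin 2) ℂ)) hF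
        simp only [Units.val_mul] at hval
        have hq2 : (qmap ψ τ (QuaternionGroup.xa u) : Matrix (Fin 2) (Fin 2) ℂ)
            = (τ : Matrix (Fin 2) (Fin 2) ℂ) * ((ψ ^ u.val : GL (Fin 2) ℂ) :
              Matrix (Fin 2) (Fin 2) ℂ) := by
          show ((τ * ψ ^ u.val : GL (Fin 2) ℂ) : Matrix (Fin 2) (Fin 2) ℂ) = _
          rw [Units.val_mul]
        rw [hq2, hφpow, hτ, hψpow, Units.val_one, Matrix.mul_fin_two, Matrix.mul_fin_two,
          Matrix.one_fin_two] at hval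
        have := congrFun (congrFun hval 0) 0
        simp at this
      | a u =>
        set kv := (Multiplicative.toAdd k).val with hkv_def
        have hval := congrArg (fun M : GL (Fin 2) ℂ => (M : Matrix (Fin 2) (Fin 2) ℂ)) hF
        simp only [Units.val_mul] at hval
        have hq2 : (qmap ψ τ (QuaternionGroup.a u) : Matrix (Fin 2) (Fin 2) ℂ)
            = !![ε ^ u.val, 0; 0, ε⁻¹ ^ u.val] := hψpow u.val
        rw [hq2, hφpow, Units.val_one, Matrix.mul_fin_two, Matrix.one_fin_two] at hval
        have e00 : ω ^ kv * ε ^ u.val = 1 := by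
          have := congrFun (congrFun hval 0) 0
          simpa using this
        have e11 : ω ^ kv * ε⁻¹ ^ u.val = 1 := by
          have := congrFun (congrFun hval 1) 1
          simpa using this
        have hA : ω ^ kv = ε ^ u.val := by
          rw [inv_pow] at e11
          exact (mul_inv_eq_one₀ (pow_ne_zero _ hεne)).mp e11
        have hε2 : ε ^ (2 * u.val) = 1 := by
          rw [two_mul, pow_add]
          nth_rewrite 1 [← hA]
          exact e00
        have huv : u.val = 0 ∨ u.val = q := by
          have hdvd : 2 * q ∣ 2 * u.val := (hε.pow_eq_one_iff_dvd _).mp hε2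
          have hqd : q ∣ u.val := (mul_dvd_mul_iff_left (two_ne_zero)).mp hdvd
          have hlt : u.val < 2 * q := ZMod.val_lt u
          rcases hqd with ⟨c, hc⟩
          have hcl : c < 2 := by
            by_contra hcl
            push_neg at hcl
            have : q * 2 ≤ q * c := Nat.mul_le_mul_left q hcl
            omega
          rcases (by omega : c = 0 ∨ c = 1) with rfl | rfl
          · left; omega
          · right; omega
        rcases huv with huv | huv
        · left
          have hωk : ω ^ kv = 1 := by
            rw [huv, pow_zero, mul_one] at e00; exact e00
          have hkv : kv = 0 := by
            have hdvd := (hω.pow_eq_one_iff_dvd _).mp hωk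
            have hlt : kv < 2 * m := ZMod.val_lt _
            exact Nat.eq_zero_of_dvd_of_lt hdvd hlt
          have hk1 : k = 1 := by
            have hh : Multiplicative.toAdd k = 0 := by
              have h3 := ZMod.natCast_rightInverse (n := 2 * m) (Multiplicative.toAdd k)
              rw [← h3, ← hkv_def, hkv, Nat.cast_zero]
            exact hh
          have hg1 : QuaternionGroup.a u = (1 : QuaternionGroup q) := by
            rw [QuaternionGroup.one_def]
            congr 1
            have h3 := ZMod.natCast_rightInverse (n := 2 * q) u
            rw [← h3, huv, Nat.cast_zero]
          rw [hk1, hg1]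
          rfl
        · right
          have hωk : ω ^ kv = -1 := by
            rw [huv, hεq] at e00
            linear_combination -e00
          have hω2 : ω ^ (2 * kv) = 1 := by
            rw [two_mul, pow_add, hωk]
            norm_num
          have hkv : kv = m := by
            have hdvd : 2 * m ∣ 2 * kv := (hω.pow_eq_one_iff_dvd _).mp hω2
            have hmd : m ∣ kv := (mul_dvd_mul_iff_left (two_ne_zero)).mp hdvd
            have hlt : kv < 2 * m := ZMod.val_lt _
            rcases hmd with ⟨c, hc⟩
            have hcl : c < 2 := by
              by_contra hcl
              push_neg at hcl
              have : m * 2 ≤ m * c := Nat.mul_le_mul_left m hcl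
              omega
            rcases (by omega : c = 0 ∨ c = 1) with rfl | rfl
            · exfalso
              have : kv = 0 := by omega
              rw [this, pow_zero] at hωk
              norm_num at hωk
            · omega
          rw [hx₀]
          have hk2 : k = Multiplicative.ofAdd (m : ZMod (2 * m)) := by
            have hh : Multiplicative.toAdd k = (m : ZMod (2 * m)) := by
              have h3 := ZMod.natCast_rightInverse (n := 2 * m) (Multiplicative.toAdd k)
              rw [← h3, ← hkv_def, hkv]
            exact hh
          have hg2 : QuaternionGroup.a u = QuaternionGroup.a (q : ZMod (2 * q)) := by
            congr 1
            have h3 := ZMod.natCast_rightInverse (n := 2 * q) u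
            rw [← h3, huv]
          rw [hk2, hg2]
    · intro h
      rcases h with h | h
      · rw [h, _root_.map_one]
      · rw [h]
        show F (Multiplicative.ofAdd (m : ZMod (2 * m)),
          QuaternionGroup.a (q : ZMod (2 * q))) = 1
        rw [hFapply]
        show φ ^ (Multiplicative.toAdd (Multiplicative.ofAdd
            (m : ZMod (2 * m)))).val * ψ ^ ((q : ZMod (2 * q))).val = 1
        rw [toAdd_ofAdd, hmval, hqval]
        ext : 1
        rw [Units.val_mul, hφpow, hψpow, hωm, hεq, hεinvq, Matrix.mul_fin_two,
          Units.val_one, Matrix.one_fin_two]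
        norm_num
  have hx₀ne : (1 : Multiplicative (ZMod (2 * m)) × QuaternionGroup q) ≠ x₀ := by
    intro h
    have h1' : (1 : Multiplicative (ZMod (2 * m))) = Multiplicative.ofAdd (m : ZMod (2 * m)) :=
      congrArg Prod.fst h
    have h2' : (0 : ZMod (2 * m)) = (m : ZMod (2 * m)) := h1'
    have h3' := congrArg ZMod.val h2'
    rw [ZMod.val_zero, hmval] at h3'
    omega
  have hkercard : Nat.card F.ker = 2 := by
    have hcoe : Nat.card F.ker = Nat.card ({1, x₀} : Set _) := by
      rw [← hker]; rfl
    rw [hcoe, Nat.card_coe_set_eq, Set.ncard_pair hx₀ne]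
  -- cardinality
  have hdom : Nat.card (Multiplicative (ZMod (2 * m)) × QuaternionGroup q)
      = 2 * m * (4 * q) := by
    rw [Nat.card_prod]
    congr 1
    · rw [Nat.card_eq_fintype_card, Fintype.card_multiplicative, ZMod.card]
    · rw [Nat.card_eq_fintype_card, QuaternionGroup.card]
  have hquot : Nat.card (Multiplicative (ZMod (2 * m)) × QuaternionGroup q)
      = Nat.card F.range * Nat.card F.ker := by
    rw [Subgroup.card_eq_card_quotient_mul_card_subgroup F.ker]
    congr 1
    exact Nat.card_congr (QuotientGroup.quotientKerEquivRange F).toEquiv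
  rw [← hrange]
  rw [hdom, hkercard] at hquot
  have h5 : Nat.card F.range * 2 = 4 * m * q * 2 := by
    rw [← hquot]; ring
  have h6 : Nat.card F.range = 4 * m * q := Nat.eq_of_mul_eq_mul_right (by norm_num) h5
  rw [h6]
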